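/- Let H be a closed densely defined operator such that for every ε > 0 the set σ_ε(H) is unbounded in ℂ but the spectrum σ(H) is contained in ℝ and discrete. Then H is not similar, via a bounded and boundedly invertible operator, to any self-adjoint operator. -/

import Mathlib

set_option linter.unusedSectionVars false
set_option linter.unnecessarySimpa false

variable {E : Type*} [NormedAddCommGroup E] [InnerProductSpace ℂ E] [CompleteSpace E]

/-- `R` is the (bounded, everywhere defined) resolvent of the operator `H` at `z`,
i.e. `R = (H - z)⁻¹`. -/
def IsResolventAt (H : E →ₗ.[ℂ] E) (z : ℂ) (R : E →L[ℂ] E) : Prop :=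
  (∀ x : E, ∃ hx : R x ∈ H.domain, H ⟨R x, hx⟩ - z • R x = x) ∧
    ∀ y : H.domain, R (H y - z • (y : E)) = y

/-- The spectrum of an unbounded operator `H`. -/
def specSet (H : E →ₗ.[ℂ] E) : Set ℂ := {z | ∀ R : E →L[ℂ] E, ¬ IsResolventAt H z R}

/-- The ε-pseudospectrum `σ_ε(H) = σ(H) ∪ {λ : ‖(H-λ)⁻¹‖ > 1/ε}`. -/
def pseudospectrum (ε : ℝ) (H : E →ₗ.[ℂ] E) : Set ℂ :=
  {z | z ∈ specSet H ∨ ∃ R : E →L[ℂ] E, IsResolventAt H z R ∧ ε⁻¹ < ‖R‖}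


/-- The conjugated operator `Ω H Ω⁻¹` with domain `Ω (Dom H)`. -/
noncomputable def conjPMap (Ω : E ≃L[ℂ] E) (H : E →ₗ.[ℂ] E) : E →ₗ.[ℂ] E where
  domain := H.domain.comap Ω.symm.toLinearEquiv.toLinearMap
  toFun := (Ω.toLinearEquiv.toLinearMap.comp H.toFun).comp
    (Ω.symm.toLinearEquiv.toLinearMap.restrict fun _ hx => hx)

lemma conjPMap_apply (Ω : E ≃L[ℂ] E) (H : E →ₗ.[ℂ] E) (x : (conjPMap Ω H).domain) :
    conjPMap Ω H x = Ω (H ⟨Ω.symm (x : E), x.2⟩) := rfl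

/-- Uniqueness of the resolvent. -/
lemma IsResolventAt.unique {H : E →ₗ.[ℂ] E} {z : ℂ} {R R' : E →L[ℂ] E}
    (h : IsResolventAt H z R) (h' : IsResolventAt H z R') : R = R' := by
  ext x
  obtain ⟨hx, hs⟩ := h'.1 x
  have := h.2 ⟨R' x, hx⟩
  simp only [LinearPMap.mk_apply] at this ⊢
  rw [show H ⟨R' x, hx⟩ - z • (R' x) = x from hs] at this
  exact this

/-- Conjugation of a resolvent. -/
lemma IsResolventAt.conj {H : E →ₗ.[ℂ] E} {z : ℂ} {R : E →L[ℂ] E} (Ω : E ≃L[ℂ] E)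
    (h : IsResolventAt H z R) :
    IsResolventAt (conjPMap Ω H) z
      ((Ω : E →L[ℂ] E) ∘L R ∘L (Ω.symm : E →L[ℂ] E)) := by
  constructor
  · intro x
    obtain ⟨hx, hs⟩ := h.1 (Ω.symm x)
    have hmem : Ω.symm ((Ω : E →L[ℂ] E) (R (Ω.symm x))) ∈ H.domain := by
      simpa using hx
    refine ⟨hmem, ?_⟩
    rw [conjPMap_apply]
    have harg : (⟨Ω.symm ((((Ω : E →L[ℂ] E) ∘L R ∘L (Ω.symm : E →L[ℂ] E)) x)), hmem⟩ :
        H.domain) = ⟨R (Ω.symm x), hx⟩ := Subtype.ext (by simp)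
    rw [harg]
    have := congrArg Ω hs
    simp only [map_sub, map_smul] at this ⊢
    simpa using this
  · intro y
    have hy : Ω.symm (y : E) ∈ H.domain := y.2
    have := h.2 ⟨Ω.symm (y : E), hy⟩
    rw [conjPMap_apply]
    simp only [ContinuousLinearMap.comp_apply, ContinuousLinearMap.coe_coe]
    rw [show (Ω.symm : E →L[ℂ] E) ((Ω ((H ⟨Ω.symm (y : E), y.2⟩))) - z • (y : E))
        = H ⟨Ω.symm (y : E), hy⟩ - z • (Ω.symm (y : E)) by simp [map_sub, map_smul]]
    rw [this]
    simp

/-- Converse conjugation. -/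
lemma IsResolventAt.unconj {H : E →ₗ.[ℂ] E} {z : ℂ} {S : E →L[ℂ] E} (Ω : E ≃L[ℂ] E)
    (h : IsResolventAt (conjPMap Ω H) z S) :
    IsResolventAt H z ((Ω.symm : E →L[ℂ] E) ∘L S ∘L (Ω : E →L[ℂ] E)) := by
  constructor
  · intro x
    obtain ⟨hx, hs⟩ := h.1 (Ω x)
    rw [conjPMap_apply] at hs
    have hmem : (Ω.symm : E →L[ℂ] E) (S ((Ω : E →L[ℂ] E) x)) ∈ H.domain := hx
    refine ⟨hmem, ?_⟩
    have := congrArg Ω.symm hs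
    simp only [map_sub, map_smul, ContinuousLinearEquiv.symm_apply_apply] at this
    simpa using this
  · intro y
    have hy : Ω.symm (Ω (y : E)) ∈ H.domain := by simpa using y.2
    have := h.2 ⟨Ω (y : E), hy⟩
    rw [conjPMap_apply] at this
    have harg : (⟨Ω.symm (Ω (y : E)), hy⟩ : H.domain) = y :=
      Subtype.ext (by simp)
    rw [harg] at this
    simp only [ContinuousLinearMap.comp_apply, ContinuousLinearMap.coe_coe]
    rw [show (Ω : E →L[ℂ] E) ((H y) - z • (y : E))
        = Ω (H y) - z • (Ω (y : E)) by simp [map_sub, map_smul]]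
    rw [this]
    simp

/-- First resolvent identity. -/
lemma IsResolventAt.sub_eq {H : E →ₗ.[ℂ] E} {z₁ z₂ : ℂ} {A B : E →L[ℂ] E}
    (hA : IsResolventAt H z₁ A) (hB : IsResolventAt H z₂ B) :
    B - A = (z₂ - z₁) • (A * B) := by
  ext x
  obtain ⟨hm, hs⟩ := hB.1 x
  have h2 := hA.2 ⟨B x, hm⟩
  simp only [LinearPMap.mk_apply] at h2 hs
  have hH : H ⟨B x, hm⟩ - z₁ • B x = x + (z₂ - z₁) • B x := by
    have h3 : (H ⟨B x, hm⟩ : E) = x + z₂ • B x := sub_eq_iff_eq_add.mp hs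
    rw [h3, sub_smul]; abel
  rw [hH] at h2
  rw [map_add, map_smul] at h2
  simp only [ContinuousLinearMap.sub_apply, ContinuousLinearMap.smul_apply,
    ContinuousLinearMap.mul_apply]
  exact sub_eq_of_eq_add' h2.symm

lemma IsResolventAt.commute {H : E →ₗ.[ℂ] E} {z₁ z₂ : ℂ} {A B : E →L[ℂ] E}
    (hA : IsResolventAt H z₁ A) (hB : IsResolventAt H z₂ B) :
    A * B = B * A := by
  rcases eq_or_ne z₁ z₂ with h | h
  · rw [hA.unique (h ▸ hB)]
  · have h1 := hA.sub_eq hB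
    have h2 := hB.sub_eq hA
    have : (z₂ - z₁) • (A * B) = (z₂ - z₁) • (B * A) := by
      rw [← h1]
      have : A - B = (z₁ - z₂) • (B * A) := h2
      rw [show z₁ - z₂ = -(z₂ - z₁) by ring, neg_smul] at this
      linear_combination (norm := module) -this
    exact smul_right_injective _ (sub_ne_zero.mpr (Ne.symm h)) this

/-- If `H` has a resolvent at `z + μ⁻¹`, then `μ ∉ spectrum ((H - z)⁻¹)`. -/
lemma isUnit_of_resolvent {H : E →ₗ.[ℂ] E} {z w μ : ℂ} {A C : E →L[ℂ] E}
    (hA : IsResolventAt H z A) (hC : IsResolventAt H w C) (hμ : μ ≠ 0)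
    (hw : w = z + μ⁻¹) :
    IsUnit (algebraMap ℂ (E →L[ℂ] E) μ - A) := by
  have hkey : A * C = μ • (C - A) := by
    have h1 := hA.sub_eq hC
    rw [show w - z = μ⁻¹ by rw [hw]; ring] at h1
    rw [h1, smul_smul, mul_inv_cancel₀ hμ, one_smul]
  have hcomm : C * A = μ • (C - A) := by rw [hC.commute hA, hkey]
  set D : E →L[ℂ] E := μ⁻¹ • (1 + μ⁻¹ • C) with hD
  have halg : algebraMap ℂ (E →L[ℂ] E) μ = μ • 1 :=
    Algebra.algebraMap_eq_smul_one μ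
  have hmul1 : (algebraMap ℂ (E →L[ℂ] E) μ - A) * D = 1 := by
    rw [halg, hD]
    simp only [mul_add, add_mul, sub_mul, mul_sub, mul_smul_comm, smul_mul_assoc,
      mul_one, one_mul, hkey]
    match_scalars <;> field_simp <;> ring
  have hmul2 : D * (algebraMap ℂ (E →L[ℂ] E) μ - A) = 1 := by
    rw [halg, hD]
    simp only [mul_add, add_mul, sub_mul, mul_sub, mul_smul_comm, smul_mul_assoc,
      mul_one, one_mul, hcomm]
    match_scalars <;> field_simp <;> ring
  exact ⟨⟨_, D, hmul1, hmul2⟩, rfl⟩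

open scoped InnerProductSpace in
/-- The adjoint of the resolvent of a symmetric operator at `z` is the resolvent
at `conj z`. -/
lemma adjoint_resolvent {h : E →ₗ.[ℂ] E} {z : ℂ} {A B : E →L[ℂ] E}
    (hsym : ∀ x y : h.domain, ⟪(h x : E), (y : E)⟫_ℂ = ⟪(x : E), (h y : E)⟫_ℂ)
    (hA : IsResolventAt h z A) (hB : IsResolventAt h (starRingEnd ℂ z) B) :
    ContinuousLinearMap.adjoint A = B := by
  ext x
  refine ext_inner_right ℂ fun y => ?_
  rw [ContinuousLinearMap.adjoint_inner_left]
  obtain ⟨hmB, hsB⟩ := hB.1 x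
  obtain ⟨hmA, hsA⟩ := hA.1 y
  set u : h.domain := ⟨B x, hmB⟩
  set v : h.domain := ⟨A y, hmA⟩
  have hx : x = (h u : E) - (starRingEnd ℂ z) • (u : E) := hsB.symm
  have hy : y = (h v : E) - z • (v : E) := hsA.symm
  calc ⟪x, A y⟫_ℂ = ⟪(h u : E) - (starRingEnd ℂ z) • (u : E), (v : E)⟫_ℂ := by
        rw [← hx]
      _ = ⟪(h u : E), (v : E)⟫_ℂ - z * ⟪(u : E), (v : E)⟫_ℂ := by
        rw [inner_sub_left, inner_smul_left, Complex.conj_conj z]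
      _ = ⟪(u : E), (h v : E)⟫_ℂ - z * ⟪(u : E), (v : E)⟫_ℂ := by rw [hsym u v]
      _ = ⟪(u : E), (h v : E) - z • (v : E)⟫_ℂ := by
        rw [inner_sub_right, inner_smul_right]
      _ = ⟪B x, y⟫_ℂ := by rw [← hy]

/-- A closed densely defined operator with real discrete spectrum whose pseudospectra
contain points arbitrarily far away is not similar to any self-adjoint operator via a
bounded and boundedly invertible transformation. -/
theorem not_similar_to_selfAdjoint_of_wild_pseudospectrum (H : E →ₗ.[ℂ] E)
    (hclosed : IsClosed (H.graph : Set (E × E))) (hdense : Dense (H.domain : Set E))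
    (hreal : ∀ z ∈ specSet H, z.im = 0)
    (hdisc : DiscreteTopology (specSet H))
    (hwild : ∃ ε₀ > (0 : ℝ), ∀ ε ∈ Set.Ioo (0 : ℝ) ε₀, ∀ κ ≥ (1 : ℝ), ∀ M > (0 : ℝ),
      ∃ z ∈ pseudospectrum ε H, M < ‖z‖ ∧ ε * κ < Metric.infDist z (specSet H)) :
    ¬ ∃ Ω : E ≃L[ℂ] E, IsSelfAdjoint (conjPMap Ω H) := by
  rintro ⟨Ω, hSA⟩
  obtain ⟨ε₀, hε₀, hw⟩ := hwild
  set K := ‖(Ω.symm : E →L[ℂ] E)‖ * ‖(Ω : E →L[ℂ] E)‖ with hKdef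
  set κ := max K 1 with hκdef
  have hκ1 : (1 : ℝ) ≤ κ := le_max_right _ _
  have hκ0 : (0 : ℝ) < κ := lt_of_lt_of_le one_pos hκ1
  set ε := ε₀ / 2 with hεdef
  have hε : 0 < ε := by positivity
  obtain ⟨z, hzps, hzM, hzd⟩ := hw ε ⟨hε, by rw [hεdef]; linarith⟩ κ hκ1 1 one_pos
  set d := Metric.infDist z (specSet H) with hddef
  have hd0 : 0 < d := lt_trans (by positivity) hzd
  have hzspec : z ∉ specSet H := by
    intro hmem
    have h0 : d = 0 := Metric.infDist_zero_of_mem hmem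
    rw [h0] at hzd
    nlinarith
  obtain (hmem | ⟨R, hR, hRn⟩) := hzps
  · exact hzspec hmem
  -- the operator h' = Ω H Ω⁻¹ and its symmetry
  have hdense' := hSA.dense_domain
  have hsym : ∀ x y : (conjPMap Ω H).domain,
      (inner ℂ ((conjPMap Ω H) x) ((y : E)) : ℂ) = inner ℂ ((x : E)) ((conjPMap Ω H) y) := by
    have hfa := LinearPMap.adjoint_isFormalAdjoint (T := conjPMap Ω H) hdense'
    rw [LinearPMap.isSelfAdjoint_def.mp hSA] at hfa
    exact hfa
  -- resolvent of H at conj z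
  have hzbar : (starRingEnd ℂ) z ∉ specSet H := by
    intro hmem
    have him := hreal _ hmem
    have hzim : z.im = 0 := by simpa using him
    have : (starRingEnd ℂ) z = z := Complex.conj_eq_iff_im.mpr hzim
    rw [this] at hmem
    exact hzspec hmem
  obtain ⟨B₀, hB₀⟩ : ∃ B₀ : E →L[ℂ] E, IsResolventAt H ((starRingEnd ℂ) z) B₀ := by
    by_contra hcon
    push_neg at hcon
    exact hzbar fun R' hR' => hcon R' hR'
  set A := (Ω : E →L[ℂ] E) ∘L R ∘L (Ω.symm : E →L[ℂ] E) with hAdef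
  have hA : IsResolventAt (conjPMap Ω H) z A := hR.conj Ω
  have hB : IsResolventAt (conjPMap Ω H) ((starRingEnd ℂ) z)
      ((Ω : E →L[ℂ] E) ∘L B₀ ∘L (Ω.symm : E →L[ℂ] E)) := hB₀.conj Ω
  have hadj := adjoint_resolvent hsym hA hB
  have hnormal : IsStarNormal A := by
    refine ⟨?_⟩
    rw [ContinuousLinearMap.star_eq_adjoint, hadj]
    exact hB.commute hA
  have hrad := IsStarNormal.spectralRadius_eq_nnnorm A
  -- spectrum bound
  have hspec : ∀ μ ∈ spectrum ℂ A, ‖μ‖ ≤ d⁻¹ := by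
    intro μ hμ
    by_contra hgt
    push_neg at hgt
    have hμ0 : μ ≠ 0 := by
      intro e
      rw [e, norm_zero] at hgt
      exact absurd hgt (not_lt.mpr (le_of_lt (inv_pos.mpr hd0)))
    set w := z + μ⁻¹ with hwdef
    have hwdist : dist z w < d := by
      have h1 : z - w = -μ⁻¹ := by rw [hwdef]; ring
      rw [dist_eq_norm, h1, norm_neg, norm_inv]
      calc ‖μ‖⁻¹ < (d⁻¹)⁻¹ := by
            exact inv_strictAnti₀ (inv_pos.mpr hd0) hgt
        _ = d := inv_inv d
    have hwspec : w ∉ specSet H := by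
      intro hmemw
      exact absurd (Metric.infDist_le_dist_of_mem hmemw) (not_le.mpr hwdist)
    obtain ⟨C₀, hC₀⟩ : ∃ C₀ : E →L[ℂ] E, IsResolventAt H w C₀ := by
      by_contra hcon
      push_neg at hcon
      exact hwspec fun R' hR' => hcon R' hR'
    exact (spectrum.mem_iff.mp hμ) (isUnit_of_resolvent hA (hC₀.conj Ω) hμ0 rfl)
  -- norm bound on A
  have hAle : ‖A‖ ≤ d⁻¹ := by
    have h1 : spectralRadius ℂ A ≤ ENNReal.ofReal d⁻¹ := by
      refine iSup₂_le fun μ hμ => ?_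
      rw [← enorm_eq_nnnorm, ← ofReal_norm]
      exact ENNReal.ofReal_le_ofReal (hspec μ hμ)
    rw [hrad, ← enorm_eq_nnnorm, ← ofReal_norm] at h1
    exact (ENNReal.ofReal_le_ofReal_iff (by positivity)).mp h1
  -- transfer back to R
  have hRA : R = (Ω.symm : E →L[ℂ] E) ∘L A ∘L (Ω : E →L[ℂ] E) := by
    ext x
    simp [hAdef]
  have hRle : ‖R‖ ≤ K * ‖A‖ := by
    rw [hRA]
    calc ‖(Ω.symm : E →L[ℂ] E) ∘L A ∘L (Ω : E →L[ℂ] E)‖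
        ≤ ‖(Ω.symm : E →L[ℂ] E)‖ * ‖A ∘L (Ω : E →L[ℂ] E)‖ :=
          ContinuousLinearMap.opNorm_comp_le _ _
      _ ≤ ‖(Ω.symm : E →L[ℂ] E)‖ * (‖A‖ * ‖(Ω : E →L[ℂ] E)‖) := by
          refine mul_le_mul_of_nonneg_left (ContinuousLinearMap.opNorm_comp_le _ _)
            (norm_nonneg _)
      _ = K * ‖A‖ := by rw [hKdef]; ring
  have hfinal : ε⁻¹ < ε⁻¹ := by
    calc ε⁻¹ < ‖R‖ := hRn
      _ ≤ K * ‖A‖ := hRle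
      _ ≤ κ * ‖A‖ := mul_le_mul_of_nonneg_right (le_max_left _ _) (norm_nonneg _)
      _ ≤ κ * d⁻¹ := mul_le_mul_of_nonneg_left hAle (le_of_lt hκ0)
      _ < κ * (ε * κ)⁻¹ := by
          refine mul_lt_mul_of_pos_left ?_ hκ0
          exact inv_strictAnti₀ (by positivity) hzd
      _ = ε⁻¹ := by
          field_simp
  exact lt_irrefl _ hfinal
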